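/- arXiv:cs/0408066 — 5 statements merged into one kernel-verified Lean document; each statement's English description precedes it below -/
import Mathlib

section
/- For b ∈ {1,...,m}, let C_b be an [n_b,k_b,d_b] linear code over Σ and I_b a set of at least n_b - d_b + 1 coordinates; let C'_b be the projection of C_b to I_b. Then every codeword c' of the tensor product C'₁ ⊗ ··· ⊗ C'_m extends to a unique codeword c of C₁ ⊗ ··· ⊗ C_m (i.e., the coordinate projection from C₁ ⊗ ··· ⊗ C_m to I₁ × ··· × I_m is a bijection onto C'₁ ⊗ ··· ⊗ C'_m). -/
set_option linter.unusedSectionVars false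

/-- Minimum Hamming distance of a code (as a set of words over a finite index type). -/
noncomputable def minDist {ι F : Type} [Fintype ι] [DecidableEq F] (C : Set (ι → F)) : ℕ :=
  sInf {e | ∃ x ∈ C, ∃ y ∈ C, x ≠ y ∧ hammingDist x y = e}

/-- The `m`-fold tensor product `C₁ ⊗ ⋯ ⊗ C_m` of codes `C b` over coordinate types
`ι b`: the set of `m`-dimensional arrays whose restriction to every axis-parallel line
in direction `b` is a codeword of `C b`. -/
def tensorFam {F : Type} {m : ℕ} {ι : Fin m → Type} (C : ∀ b, Set (ι b → F)) :
    Set (((b : Fin m) → ι b) → F) :=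
  {r | ∀ (b : Fin m) (x : (b' : Fin m) → ι b'),
    (fun i => r (Function.update x b i)) ∈ C b}

section aux
variable {F : Type} [Field F] [DecidableEq F]

/-- Restriction (coordinate projection) to a subset of coordinates, as a linear map. -/
def resL {n : ℕ} (I : Finset (Fin n)) : (Fin n → F) →ₗ[F] ({x // x ∈ I} → F) :=
  LinearMap.funLeft F F (fun i : {x // x ∈ I} => (i : Fin n))

lemma resL_apply {n : ℕ} (I : Finset (Fin n)) (v : Fin n → F) :
    resL I v = fun i : {x // x ∈ I} => v ↑i := rfl

/-- A linear functional applied pointwise to a family of rows, whose columns all lie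
in a submodule `D`, yields a function in `D`. -/
lemma col_comb_mem {ι' κ : Type} [Fintype κ] [DecidableEq κ] (D : Submodule F (ι' → F))
    (ψ : (κ → F) →ₗ[F] F) (ℓ : ι' → κ → F) (h : ∀ j, (fun i => ℓ i j) ∈ D) :
    (fun i => ψ (ℓ i)) ∈ D := by
  have hrw : (fun i => ψ (ℓ i)) =
      ∑ j : κ, ψ (fun j' => if j = j' then 1 else 0) • (fun i => ℓ i j) := by
    funext i
    rw [pi_eq_sum_univ (ℓ i), map_sum]
    simp [Finset.sum_apply, smul_eq_mul, mul_comm]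
  rw [hrw]
  exact Submodule.sum_mem _ fun j _ => Submodule.smul_mem _ _ (h j)

/-- Two codewords agreeing on a large set of coordinates are equal. -/
lemma proj_inj {n d : ℕ} (C : Submodule F (Fin n → F))
    (hd : minDist ((C : Set (Fin n → F))) = d)
    (I : Finset (Fin n)) (hI : n - d + 1 ≤ I.card) :
    ∀ x ∈ C, ∀ y ∈ C, (∀ i ∈ I, x i = y i) → x = y := by
  intro x hx y hy hagree
  by_contra hne
  have hmem : hammingDist x y ∈ {e | ∃ a ∈ (C : Set (Fin n → F)), ∃ b ∈ (C : Set (Fin n → F)),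
      a ≠ b ∧ hammingDist a b = e} := ⟨x, hx, y, hy, hne, rfl⟩
  have hdle : d ≤ hammingDist x y := hd ▸ Nat.sInf_le hmem
  have hsub : (Finset.univ.filter (fun i => x i ≠ y i)) ⊆ Finset.univ \ I := by
    intro i hi
    simp only [Finset.mem_filter, Finset.mem_univ, true_and] at hi
    simp only [Finset.mem_sdiff, Finset.mem_univ, true_and]
    intro hiI
    exact hi (hagree i hiI)
  have h1 : hammingDist x y ≤ n - I.card := by
    calc hammingDist x y = (Finset.univ.filter (fun i => x i ≠ y i)).card := rfl
      _ ≤ (Finset.univ \ I).card := Finset.card_le_card hsub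
      _ = n - I.card := by
          rw [Finset.card_sdiff_of_subset (Finset.subset_univ I)]
          simp
  have h2 : I.card ≤ n := by simpa using Finset.card_le_univ I
  omega

/-- A linear section of the coordinate projection on a code with large distance. -/
lemma exists_section {n d : ℕ} (C : Submodule F (Fin n → F))
    (hd : minDist ((C : Set (Fin n → F))) = d)
    (I : Finset (Fin n)) (hI : n - d + 1 ≤ I.card) :
    ∃ E : ({x // x ∈ I} → F) →ₗ[F] (Fin n → F),
      ∀ v ∈ C, E (fun i => v ↑i) = v := by
  have hinj := proj_inj C hd I hI
  have hmem : ∀ x ∈ C, resL I x ∈ C.map (resL I (F := F)) :=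
    fun x hx => Submodule.mem_map_of_mem hx
  let res' : C →ₗ[F] C.map (resL I (F := F)) := (resL I).restrict hmem
  have hbij : Function.Bijective res' := by
    constructor
    · rintro ⟨x, hx⟩ ⟨y, hy⟩ hxy
      have hxy' : resL I x = resL I y := congrArg Subtype.val hxy
      ext1
      apply hinj x hx y hy
      intro i hi
      exact congrFun hxy' ⟨i, hi⟩
    · rintro ⟨w, x, hx, rfl⟩
      exact ⟨⟨x, hx⟩, rfl⟩
  let e := LinearEquiv.ofBijective res' hbij
  obtain ⟨E, hE⟩ := LinearMap.exists_extend (C.subtype ∘ₗ e.symm.toLinearMap)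
  refine ⟨E, fun v hv => ?_⟩
  have h2 : E (resL I v) = (C.subtype ∘ₗ e.symm.toLinearMap) ⟨resL I v, hmem v hv⟩ :=
    LinearMap.congr_fun hE ⟨resL I v, hmem v hv⟩
  have h3 : (⟨resL I v, hmem v hv⟩ : C.map (resL I (F := F))) = e ⟨v, hv⟩ := rfl
  have h4 : E (resL I v) = ↑(e.symm (e ⟨v, hv⟩)) := by rw [h2, h3]; rfl
  rw [LinearEquiv.symm_apply_apply] at h4
  exact h4

lemma coe_update {m : ℕ} {n : Fin m → ℕ} {I : ∀ b, Finset (Fin (n b))}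
    (x : (b : Fin m) → {x // x ∈ I b}) (b : Fin m)
    (i : {x // x ∈ I b}) :
    (fun b' => ((Function.update x b i b' : {x // x ∈ I b'}) : Fin (n b'))) =
      Function.update (fun b' => ((x b' : Fin (n b')))) b (i : Fin (n b)) := by
  funext b'
  rcases eq_or_ne b' b with rfl | h
  · simp
  · simp [Function.update_of_ne h]

/-- The partial-extension induction: extend the projected tensor codeword axis by axis. -/
lemma exists_partial {m : ℕ} (n d : Fin m → ℕ)
    (C : ∀ b, Submodule F (Fin (n b) → F))
    (hd : ∀ b, minDist ((C b : Set (Fin (n b) → F))) = d b)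
    (I : ∀ b, Finset (Fin (n b))) (hI : ∀ b, n b - d b + 1 ≤ (I b).card)
    (E : ∀ b, ({x // x ∈ I b} → F) →ₗ[F] (Fin (n b) → F))
    (hE : ∀ b, ∀ v ∈ C b, E b (fun i => v ↑i) = v)
    (r' : ((b : Fin m) → {x // x ∈ I b}) → F)
    (hr' : ∀ (b : Fin m) (x : (b' : Fin m) → {x // x ∈ I b'}),
      (fun i => r' (Function.update x b i)) ∈ (C b).map (resL (I b) (F := F)))
    (t : ℕ) :
    ∃ g : ((b : Fin m) → Fin (n b)) → F,
      (∀ X : (b : Fin m) → Fin (n b), (∀ b : Fin m, t ≤ (b : ℕ) → X b ∈ I b) →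
        (∀ b : Fin m, (b : ℕ) < t → (fun j => g (Function.update X b j)) ∈ C b) ∧
        (∀ b : Fin m, t ≤ (b : ℕ) →
          (fun i : {x // x ∈ I b} => g (Function.update X b ↑i))
            ∈ (C b).map (resL (I b) (F := F)))) ∧
      (∀ x : (b : Fin m) → {x // x ∈ I b}, g (fun b => ↑(x b)) = r' x) := by
  induction t with
  | zero =>
    refine ⟨fun X => if h : ∀ b, X b ∈ I b then r' (fun b => ⟨X b, h b⟩) else 0, ?_, ?_⟩
    · intro X hX
      refine ⟨fun b hb => absurd hb (Nat.not_lt_zero _), fun b _ => ?_⟩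
      have hXI : ∀ b', X b' ∈ I b' := fun b' => hX b' (Nat.zero_le _)
      have key : (fun i : {x // x ∈ I b} =>
          (if h : ∀ b', Function.update X b (↑i) b' ∈ I b' then
            r' (fun b' => ⟨Function.update X b (↑i) b', h b'⟩) else 0)) =
          fun i => r' (Function.update (fun b' => ⟨X b', hXI b'⟩) b i) := by
        funext i
        have hC : ∀ b', Function.update X b (↑i) b' ∈ I b' := by
          intro b'; rcases eq_or_ne b' b with rfl | hne
          · simpa using i.2
          · rw [Function.update_of_ne hne]; exact hXI b'
        rw [dif_pos hC]
        congr 1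
        funext b'
        rcases eq_or_ne b' b with rfl | hne
        · apply Subtype.ext; simp
        · apply Subtype.ext; simp [Function.update_of_ne hne]
      show (fun i : {x // x ∈ I b} =>
          (if h : ∀ b', Function.update X b (↑i) b' ∈ I b' then
            r' (fun b' => ⟨Function.update X b (↑i) b', h b'⟩) else 0)) ∈ _
      rw [key]
      exact hr' b (fun b' => ⟨X b', hXI b'⟩)
    · intro x
      have hC : ∀ b, (fun b' => ((x b' : Fin (n b')))) b ∈ I b := fun b => (x b).2
      show (if h : ∀ b, (fun b' => ((x b' : Fin (n b')))) b ∈ I b then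
          r' (fun b => ⟨(fun b' => ((x b' : Fin (n b')))) b, h b⟩) else 0) = r' x
      rw [dif_pos hC]
  | succ t ih =>
    obtain ⟨g, hg1, hg2⟩ := ih
    by_cases htm : t < m
    · set bt : Fin m := ⟨t, htm⟩ with hbt
      refine ⟨fun X => E bt (fun i => g (Function.update X bt ↑i)) (X bt), ?_, ?_⟩
      · intro X hX
        -- points obtained by moving the t-th coordinate into I bt satisfy the level-t condition
        have hX0 : ∀ (i : {x // x ∈ I bt}) (b : Fin m), t ≤ (b : ℕ) →
            Function.update X bt (↑i) b ∈ I b := by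
          intro i b hb
          rcases eq_or_ne b bt with rfl | hbb
          · simpa using i.2
          · rw [Function.update_of_ne hbb]
            apply hX
            have : (b : ℕ) ≠ t := fun hc => hbb (Fin.ext hc)
            omega
        have hIne : (I bt).Nonempty := Finset.card_pos.mp (by have := hI bt; omega)
        obtain ⟨i₀, hi₀⟩ := hIne
        have hline : (fun i : {x // x ∈ I bt} =>
            g (Function.update X bt ↑i)) ∈ (C bt).map (resL (I bt) (F := F)) := by
          have h1 := (hg1 (Function.update X bt ↑(⟨i₀, hi₀⟩ : {x // x ∈ I bt}))
            (hX0 ⟨i₀, hi₀⟩)).2 bt le_rfl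
          have h2 : (fun i : {x // x ∈ I bt} =>
              g (Function.update (Function.update X bt (i₀ : Fin (n bt))) bt ↑i)) =
              fun i : {x // x ∈ I bt} => g (Function.update X bt ↑i) := by
            funext i; rw [Function.update_idem]
          rwa [h2] at h1
        obtain ⟨c, hc, hcc⟩ := hline
        have hEc : E bt (fun i => g (Function.update X bt ↑i)) = c := by
          rw [← hcc]
          exact hE bt c hc
        constructor
        · intro b hb
          rcases eq_or_ne b bt with rfl | hbb
          · -- full line along the new axis equals c
            have hgoal : (fun j : Fin (n bt) =>
                E bt (fun i => g (Function.update (Function.update X bt j) bt ↑i))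
                  (Function.update X bt j bt)) = c := by
              funext j
              have h2 : (fun i : {x // x ∈ I bt} =>
                  g (Function.update (Function.update X bt j) bt ↑i)) =
                  fun i : {x // x ∈ I bt} => g (Function.update X bt ↑i) := by
                funext i; rw [Function.update_idem]
              rw [h2, Function.update_self, hEc]
            exact hgoal ▸ hc
          · -- old full axes, b < t
            have hbb' : (b : ℕ) < t := by
              have : (b : ℕ) ≠ t := fun hc => hbb (Fin.ext hc)
              omega
            have hcols : ∀ i : {x // x ∈ I bt},
                (fun j : Fin (n b) => g (Function.update (Function.update X bt ↑i) b j)) ∈ C b :=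
              fun i => (hg1 _ (hX0 i)).1 b hbb'
            have hmain := col_comb_mem (C b) ((LinearMap.proj (X bt)).comp (E bt))
              (fun j i => g (Function.update (Function.update X bt ↑i) b j)) hcols
            have hfun : (fun j : Fin (n b) =>
                E bt (fun i => g (Function.update (Function.update X b j) bt ↑i))
                  (Function.update X b j bt)) =
                fun j => ((LinearMap.proj (X bt)).comp (E bt))
                  (fun i => g (Function.update (Function.update X bt ↑i) b j)) := by
              funext j
              have hl : (fun i : {x // x ∈ I bt} =>
                  g (Function.update (Function.update X b j) bt ↑i)) =
                  fun i : {x // x ∈ I bt} =>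
                    g (Function.update (Function.update X bt ↑i) b j) := by
                funext i; rw [Function.update_comm hbb]
              rw [Function.update_of_ne (Ne.symm hbb), hl]
              all_goals rfl
            exact hfun ▸ hmain
        · intro b hb
          have hbb : b ≠ bt := by
            intro hc
            rw [hc] at hb
            simp only [hbt] at hb
            omega
          have hcols : ∀ i : {x // x ∈ I bt},
              (fun i' : {x // x ∈ I b} =>
                g (Function.update (Function.update X bt ↑i) b ↑i'))
                ∈ (C b).map (resL (I b) (F := F)) :=
            fun i => (hg1 _ (hX0 i)).2 b (by omega)
          have hmain := col_comb_mem ((C b).map (resL (I b) (F := F)))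
            ((LinearMap.proj (X bt)).comp (E bt))
            (fun (i' : {x // x ∈ I b}) i =>
              g (Function.update (Function.update X bt ↑i) b ↑i')) hcols
          have hfun : (fun i' : {x // x ∈ I b} =>
              E bt (fun i => g (Function.update (Function.update X b ↑i') bt ↑i))
                (Function.update X b (↑i') bt)) =
              fun i' : {x // x ∈ I b} => ((LinearMap.proj (X bt)).comp (E bt))
                (fun i => g (Function.update (Function.update X bt ↑i) b ↑i')) := by
            funext i'
            have hl : (fun i : {x // x ∈ I bt} =>
                g (Function.update (Function.update X b (↑i')) bt ↑i)) =
                fun i : {x // x ∈ I bt} =>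
                  g (Function.update (Function.update X bt ↑i) b ↑i') := by
              funext i; rw [Function.update_comm hbb]
            rw [Function.update_of_ne (Ne.symm hbb), hl]
            all_goals rfl
          exact hfun ▸ hmain
      · intro x
        have hXI : ∀ b : Fin m, t ≤ (b : ℕ) → (fun b' => ((x b' : Fin (n b')))) b ∈ I b :=
          fun b _ => (x b).2
        have hline := (hg1 (fun b' => ((x b' : Fin (n b')))) hXI).2 bt le_rfl
        obtain ⟨c, hc, hcc⟩ := hline
        have hEc : E bt (fun i => g (Function.update (fun b' => ((x b' : Fin (n b')))) bt ↑i)) = c := by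
          rw [← hcc]; exact hE bt c hc
        show E bt (fun i => g (Function.update (fun b' => ((x b' : Fin (n b')))) bt ↑i))
            ((x bt : Fin (n bt))) = r' x
        rw [hEc]
        have h5 : c ((x bt : Fin (n bt))) =
            g (Function.update (fun b' => ((x b' : Fin (n b')))) bt ((x bt : Fin (n bt)))) :=
          congrFun hcc (x bt)
        rw [h5, Function.update_eq_self]
        exact hg2 x
    · refine ⟨g, ?_, hg2⟩
      intro X hX
      have hvac : ∀ b : Fin m, t ≤ (b : ℕ) → X b ∈ I b :=
        fun b hb => absurd hb (by have := b.isLt; omega)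
      obtain ⟨h1, h2⟩ := hg1 X hvac
      exact ⟨fun b _ => h1 b (by have := b.isLt; omega), fun b hb => h2 b (by omega)⟩

end aux

/-- For `b ∈ [m]`, let `C b` be an `[n b, k b, d b]` code and `I b` a set of
at least `n b - d b + 1` coordinates. Then the coordinate projection from
`C₁ ⊗ ⋯ ⊗ C_m` to `I₁ × ⋯ × I_m` is a bijection onto `C'₁ ⊗ ⋯ ⊗ C'_m`, where `C' b`
is the projection of `C b` to `I b`; i.e. every codeword of the projected tensor code
extends to a unique codeword of the full tensor code. -/
theorem tensor_unique_extension
    {F : Type} [Field F] [DecidableEq F] {m : ℕ}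
    (n k d : Fin m → ℕ)
    (C : ∀ b, Submodule F (Fin (n b) → F))
    (hk : ∀ b, Module.finrank F (C b) = k b)
    (hd : ∀ b, minDist ((C b : Set (Fin (n b) → F))) = d b)
    (I : ∀ b, Finset (Fin (n b))) (hI : ∀ b, n b - d b + 1 ≤ (I b).card) :
    Set.BijOn
      (fun (r : ((b : Fin m) → Fin (n b)) → F) (x : (b : Fin m) → (I b : Finset (Fin (n b)))) =>
        r (fun b => (x b : Fin (n b))))
      (tensorFam (fun b => (C b : Set (Fin (n b) → F))))
      (tensorFam (fun b =>
        (fun (v : Fin (n b) → F) (i : (I b : Finset (Fin (n b)))) => v (i : Fin (n b))) ''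
          (C b : Set (Fin (n b) → F)))) := by
  refine ⟨?_, ?_, ?_⟩
  · -- MapsTo
    intro r hr b x
    refine ⟨fun j => r (Function.update (fun b' => ((x b' : Fin (n b')))) b j),
      hr b (fun b' => ((x b' : Fin (n b')))), ?_⟩
    funext i
    show r (Function.update (fun b' => ((x b' : Fin (n b')))) b ↑i) =
      r (fun b' => ((Function.update x b i b' : Fin (n b'))))
    rw [coe_update]
  · -- InjOn
    intro r hr s hs h
    have claim : ∀ t : ℕ, ∀ X : (b : Fin m) → Fin (n b),
        (∀ b : Fin m, t ≤ (b : ℕ) → X b ∈ I b) → r X = s X := by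
      intro t
      induction t with
      | zero =>
        intro X hX
        have hXx : X = fun b => ((⟨X b, hX b (Nat.zero_le _)⟩ :
            {x // x ∈ I b}) : Fin (n b)) := funext fun b => rfl
        rw [hXx]
        exact congrFun h (fun b => ⟨X b, hX b (Nat.zero_le _)⟩)
      | succ t ih =>
        intro X hX
        by_cases htm : t < m
        · set bt : Fin m := ⟨t, htm⟩ with hbt
          have heq := proj_inj (C bt) (hd bt) (I bt) (hI bt)
            _ (hr bt X) _ (hs bt X) ?_
          · have := congrFun heq (X bt)
            simpa [Function.update_eq_self] using this
          · intro i hi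
            show r (Function.update X bt i) = s (Function.update X bt i)
            apply ih
            intro b hb
            rcases eq_or_ne b bt with rfl | hbb
            · simpa using hi
            · rw [Function.update_of_ne hbb]
              apply hX
              have : (b : ℕ) ≠ t := fun hc => hbb (Fin.ext hc)
              omega
        · exact ih X (fun b hb => absurd hb (by have := b.isLt; omega))
    funext X
    exact claim m X (fun b hb => absurd hb (by have := b.isLt; omega))
  · -- SurjOn
    intro r' hr'
    choose E hE using fun b => exists_section (C b) (hd b) (I b) (hI b)
    have hr'' : ∀ (b : Fin m) (x : (b' : Fin m) → {x // x ∈ I b'}),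
        (fun i => r' (Function.update x b i)) ∈ (C b).map (resL (I b) (F := F)) := by
      intro b x
      obtain ⟨v, hv, hveq⟩ := hr' b x
      exact ⟨v, hv, hveq⟩
    obtain ⟨g, hg1, hg2⟩ := exists_partial n d C hd I hI E hE r' hr'' m
    refine ⟨g, ?_, ?_⟩
    · intro b X
      exact (hg1 X (fun b' hb' => absurd hb' (by have := b'.isLt; omega))).1 b b.isLt
    · funext x
      exact hg2 x
end

section
/- Robustness multiplies under Tanner composition: with C = TPC(G₁,C₁) and C₁ = TPC(G₂,C₂) as in the composition setup, if the pair (G₁,C₁) is c₁-robust and (G₂,C₂) is c₂-robust, then (G₁ © G₂, C₂) is c₁·c₂-robust. -/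
/-- Relative Hamming distance between two words indexed by a finite type. -/
noncomputable def relHammingDist {ι F : Type} [Fintype ι] [DecidableEq F] (x y : ι → F) : ℝ :=
  (hammingDist x y : ℝ) / (Fintype.card ι)

/-- Relative Hamming distance from a word to (the nearest codeword of) a code. -/
noncomputable def distToCode {ι F : Type} [Fintype ι] [DecidableEq F] (C : Set (ι → F)) (r : ι → F) : ℝ :=
  sInf (relHammingDist r '' C)

/-- The Tanner product code of an ordered bipartite graph (given by its ordered
adjacency lists `ℓ j : Q → V`) and a small code `Cs ⊆ F^Q`. -/
def TPC {F V Q J : Type} (ℓ : J → Q → V) (Cs : Set (Q → F)) : Set (V → F) :=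
  {r | ∀ j, (fun q => r (ℓ j q)) ∈ Cs}

/-- A Tanner pair `(G, Cs)` is `α`-robust: for every word `r`, the expected relative
distance of the projection of `r` to a random test's neighborhood from `Cs` is at
least `α` times the relative distance of `r` from `TPC(G, Cs)`. (Codewords trivially
pass all tests, by definition of `TPC`.) -/
def IsRobustPair {F V Q J : Type} [Fintype V] [Fintype Q] [Fintype J] [DecidableEq F]
    (α : ℝ) (ℓ : J → Q → V) (Cs : Set (Q → F)) : Prop :=
  ∀ r : V → F,
    α * distToCode (TPC ℓ Cs) r ≤
      (∑ j : J, distToCode Cs (fun q => r (ℓ j q))) / (Fintype.card J)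

/-- Robustness multiplies under Tanner composition. If `C₁ = TPC(G₂, C₂)`,
`(G₁, C₁)` is `c₁`-robust and `(G₂, C₂)` is `c₂`-robust, then the composed pair
`(G₁ © G₂, C₂)` is `c₁·c₂`-robust. -/
theorem robustness_multiplies
    {F : Type} [Field F] [Fintype F] [DecidableEq F] {N M D m d : ℕ}
    (ℓ₁ : Fin M → Fin D → Fin N) (ℓ₂ : Fin m → Fin d → Fin D)
    (C₂ : Set (Fin d → F)) (C₁ : Set (Fin D → F)) (hC₁ : C₁ = TPC ℓ₂ C₂)
    (c₁ c₂ : ℝ) (hc₁ : 0 ≤ c₁) (hc₂ : 0 ≤ c₂)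
    (h₁ : IsRobustPair c₁ ℓ₁ C₁) (h₂ : IsRobustPair c₂ ℓ₂ C₂) :
    IsRobustPair (c₁ * c₂) (fun (p : Fin M × Fin m) (i : Fin d) => ℓ₁ p.1 (ℓ₂ p.2 i)) C₂ := by
  intro r
  have hT : TPC (fun (p : Fin M × Fin m) (i : Fin d) => ℓ₁ p.1 (ℓ₂ p.2 i)) C₂ = TPC ℓ₁ C₁ := by
    subst hC₁
    ext x
    constructor
    · intro h j j'
      exact h (j, j')
    · intro h p
      exact h p.1 p.2
  rw [hT]
  have h1 : c₁ * distToCode (TPC ℓ₁ C₁) r ≤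
      (∑ j : Fin M, distToCode C₁ (fun q => r (ℓ₁ j q))) / (M : ℝ) := by
    simpa using h₁ r
  have h2 : ∀ j : Fin M, c₂ * distToCode C₁ (fun q => r (ℓ₁ j q)) ≤
      (∑ j' : Fin m, distToCode C₂ (fun q => r (ℓ₁ j (ℓ₂ j' q)))) / (m : ℝ) := by
    intro j
    have := h₂ (fun q => r (ℓ₁ j q))
    rw [← hC₁] at this
    simpa using this
  have hsum : c₂ * (∑ j : Fin M, distToCode C₁ (fun q => r (ℓ₁ j q))) ≤
      ∑ j : Fin M, (∑ j' : Fin m, distToCode C₂ (fun q => r (ℓ₁ j (ℓ₂ j' q)))) / (m : ℝ) := by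
    rw [Finset.mul_sum]
    exact Finset.sum_le_sum fun j _ => h2 j
  have hM : (0 : ℝ) ≤ (M : ℝ) := by positivity
  calc c₁ * c₂ * distToCode (TPC ℓ₁ C₁) r
      = c₂ * (c₁ * distToCode (TPC ℓ₁ C₁) r) := by ring
    _ ≤ c₂ * ((∑ j : Fin M, distToCode C₁ (fun q => r (ℓ₁ j q))) / (M : ℝ)) :=
        mul_le_mul_of_nonneg_left h1 hc₂
    _ = (c₂ * ∑ j : Fin M, distToCode C₁ (fun q => r (ℓ₁ j q))) / (M : ℝ) :=
        (mul_div_assoc _ _ _).symm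
    _ ≤ (∑ j : Fin M, (∑ j' : Fin m, distToCode C₂ (fun q => r (ℓ₁ j (ℓ₂ j' q)))) / (m : ℝ)) / (M : ℝ) := by
        rw [div_eq_mul_inv, div_eq_mul_inv]
        exact mul_le_mul_of_nonneg_right hsum (by positivity)
    _ = (∑ p : Fin M × Fin m, distToCode C₂ (fun q => r (ℓ₁ p.1 (ℓ₂ p.2 q)))) /
          (Fintype.card (Fin M × Fin m)) := by
        rw [← Finset.sum_div, Fintype.sum_prod_type]
        simp [div_div, mul_comm]
end

section
/- Expansion of the product-test graph: Fix n and m ≥ 3 and let G^n_m be the bipartite graph with left vertex set L = [n]^m, right vertex set R = [m] × [n], where point (i₁,...,i_m) is adjacent to plane (b,i) iff i_b = i; so left degree d_L = m and right degree d_R = n^{m-1}. For any S ⊆ L with |S|/|L| ≤ 1/4 and any T ⊆ R, the number of edges with exactly one endpoint in S ∪ T satisfies |Γ(S ∪ T)| ≥ (d_L/8)|S| + (d_R/8)|T|. -/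
open Finset

section ProductGraphExpansionAux

variable {n m : ℕ}

private lemma pge_card_fiber (K : Finset (Fin m)) (w : Fin m → Fin n) :
    (Finset.univ.filter (fun u : Fin m → Fin n => ∀ c ∈ K, u c = w c)).card
      = n ^ (m - K.card) := by
  rw [← Fintype.card_subtype]
  have e : {u : Fin m → Fin n // ∀ c ∈ K, u c = w c} ≃ ({c : Fin m // c ∉ K} → Fin n) :=
    { toFun := fun u c => u.1 c.1
      invFun := fun v => ⟨fun c => if h : c ∈ K then w c else v ⟨c, h⟩,
        fun c hc => dif_pos hc⟩
      left_inv := fun u => by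
        apply Subtype.ext
        funext c
        by_cases h : c ∈ K
        · simp [h, u.2 c h]
        · simp [h]
      right_inv := fun v => by
        funext c
        simp [c.2] }
  rw [Fintype.card_congr e, Fintype.card_fun, Fintype.card_fin]
  congr 1
  rw [Fintype.card_subtype_compl, Fintype.card_coe, Fintype.card_fin]

private lemma pge_card_fiber1 (b : Fin m) (i : Fin n) :
    (Finset.univ.filter (fun u : Fin m → Fin n => u b = i)).card = n ^ (m - 1) := by
  have := pge_card_fiber ({b} : Finset (Fin m)) (fun _ => i)
  simpa using this

private lemma pge_card_fiber2 {b b' : Fin m} (hbb : b ≠ b') (i i' : Fin n) :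
    (Finset.univ.filter (fun u : Fin m → Fin n => u b = i ∧ u b' = i')).card
      = n ^ (m - 2) := by
  have h := pge_card_fiber ({b, b'} : Finset (Fin m)) (fun c => if c = b then i else i')
  rw [Finset.card_insert_of_notMem (by simpa using hbb), Finset.card_singleton] at h
  rw [← h]
  congr 1
  apply Finset.filter_congr
  intro u _
  simp [Finset.forall_mem_insert, hbb.symm]

private lemma pge_sum_eval (b : Fin m) (φ : Fin n → ℝ) :
    ∑ u : Fin m → Fin n, φ (u b) = (n ^ (m-1) : ℝ) * ∑ i, φ i := by
  rw [← Finset.sum_fiberwise Finset.univ (fun u : Fin m → Fin n => u b)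
    (fun u => φ (u b)), Finset.mul_sum]
  refine Finset.sum_congr rfl (fun i _ => ?_)
  rw [Finset.sum_congr rfl (fun u hu => by rw [(Finset.mem_filter.mp hu).2] :
    ∀ u ∈ Finset.univ.filter (fun u : Fin m → Fin n => u b = i), φ (u b) = φ i),
    Finset.sum_const, pge_card_fiber1, nsmul_eq_mul]
  push_cast
  ring

private lemma pge_sum_eval2 {b b' : Fin m} (hbb : b ≠ b') (φ ψ : Fin n → ℝ) :
    ∑ u : Fin m → Fin n, φ (u b) * ψ (u b')
      = (n ^ (m-2) : ℝ) * (∑ i, φ i) * (∑ i, ψ i) := by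
  rw [← Finset.sum_fiberwise Finset.univ (fun u : Fin m → Fin n => (u b, u b'))
    (fun u => φ (u b) * ψ (u b'))]
  rw [Fintype.sum_prod_type]
  have key : ∀ (i i' : Fin n),
      ∑ u ∈ Finset.univ.filter (fun u : Fin m → Fin n => (u b, u b') = (i, i')),
        φ (u b) * ψ (u b') = (n ^ (m-2) : ℝ) * (φ i * ψ i') := by
    intro i i'
    have hpred : (Finset.univ.filter (fun u : Fin m → Fin n => (u b, u b') = (i, i')))
        = Finset.univ.filter (fun u : Fin m → Fin n => u b = i ∧ u b' = i') := by
      apply Finset.filter_congr; intro u _; simp [Prod.ext_iff]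
    rw [hpred, Finset.sum_congr rfl (fun u hu => by
        obtain ⟨-, h1, h2⟩ := Finset.mem_filter.mp hu
        rw [h1, h2] :
      ∀ u ∈ Finset.univ.filter (fun u : Fin m → Fin n => u b = i ∧ u b' = i'),
        φ (u b) * ψ (u b') = φ i * ψ i'),
      Finset.sum_const, pge_card_fiber2 hbb, nsmul_eq_mul]
    push_cast; ring
  calc ∑ i : Fin n, ∑ i' : Fin n,
        ∑ u ∈ Finset.univ.filter (fun u : Fin m → Fin n => (u b, u b') = (i, i')),
          φ (u b) * ψ (u b')
      = ∑ i : Fin n, ∑ i' : Fin n, (n ^ (m-2) : ℝ) * (φ i * ψ i') := by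
        refine Finset.sum_congr rfl fun i _ => Finset.sum_congr rfl fun i' _ => key i i'
    _ = (n ^ (m-2) : ℝ) * (∑ i, φ i) * (∑ i, ψ i) := by
        simp only [← Finset.mul_sum, ← Finset.sum_mul]; ring

noncomputable def pgeSgm (S : Finset (Fin m → Fin n)) (b : Fin m) (i : Fin n) : ℝ :=
  ((S.filter (fun u => u b = i)).card : ℝ)

noncomputable def pgeT (S : Finset (Fin m → Fin n)) (u : Fin m → Fin n) : ℝ :=
  ∑ b, pgeSgm S b (u b)

variable (S : Finset (Fin m → Fin n))

private lemma pge_sum_sgm (b : Fin m) : ∑ i, pgeSgm S b i = S.card := by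
  unfold pgeSgm
  rw [← Nat.cast_sum]
  norm_cast
  exact (Finset.card_eq_sum_card_fiberwise (fun u _ => Finset.mem_univ (u b))).symm

private lemma pge_sum_t_S : ∑ u ∈ S, pgeT S u = ∑ b, ∑ i, (pgeSgm S b i)^2 := by
  unfold pgeT
  rw [Finset.sum_comm]
  refine Finset.sum_congr rfl fun b _ => ?_
  rw [← Finset.sum_fiberwise S (fun u => u b) (fun u => pgeSgm S b (u b))]
  refine Finset.sum_congr rfl fun i _ => ?_
  rw [Finset.sum_congr rfl (fun u hu => by rw [(Finset.mem_filter.mp hu).2] :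
      ∀ u ∈ S.filter (fun u => u b = i), pgeSgm S b (u b) = pgeSgm S b i),
    Finset.sum_const, nsmul_eq_mul, sq]
  rfl

private lemma pge_sum_t_univ :
    ∑ u : Fin m → Fin n, pgeT S u = (m : ℝ) * (n^(m-1) : ℝ) * S.card := by
  unfold pgeT
  rw [Finset.sum_comm]
  rw [Finset.sum_congr rfl (fun b _ => by rw [pge_sum_eval b (pgeSgm S b), pge_sum_sgm])]
  rw [Finset.sum_const, Finset.card_univ, Fintype.card_fin, nsmul_eq_mul]
  ring

private lemma pge_sum_t_sq (hm : 1 ≤ m) : ∑ u : Fin m → Fin n, (pgeT S u)^2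
    = (n^(m-1) : ℝ) * (∑ b, ∑ i, (pgeSgm S b i)^2)
      + (m : ℝ) * ((m:ℝ) - 1) * (n^(m-2) : ℝ) * (S.card : ℝ)^2 := by
  unfold pgeT
  have expand : ∀ u : Fin m → Fin n,
      (∑ b, pgeSgm S b (u b))^2 = ∑ b, ∑ b', pgeSgm S b (u b) * pgeSgm S b' (u b') := by
    intro u; rw [sq, Finset.sum_mul_sum]
  rw [Finset.sum_congr rfl fun u _ => expand u, Finset.sum_comm]
  rw [Finset.sum_congr rfl fun b _ => Finset.sum_comm]
  have inner : ∀ b : Fin m, ∑ b', ∑ u : Fin m → Fin n, pgeSgm S b (u b) * pgeSgm S b' (u b')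
      = (n^(m-1) : ℝ) * (∑ i, (pgeSgm S b i)^2)
        + ((m:ℝ)-1) * ((n^(m-2) : ℝ) * (S.card:ℝ)^2) := by
    intro b
    rw [← Finset.add_sum_erase _ _ (Finset.mem_univ b)]
    have diag : ∑ u : Fin m → Fin n, pgeSgm S b (u b) * pgeSgm S b (u b)
        = (n^(m-1) : ℝ) * (∑ i, (pgeSgm S b i)^2) := by
      have := pge_sum_eval b (fun i => pgeSgm S b i * pgeSgm S b i)
      simpa [sq] using this
    have offd : ∑ b' ∈ Finset.univ.erase b,
        ∑ u : Fin m → Fin n, pgeSgm S b (u b) * pgeSgm S b' (u b')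
        = ((m:ℝ)-1) * ((n^(m-2) : ℝ) * (S.card:ℝ)^2) := by
      rw [Finset.sum_congr rfl (fun b' hb' => by
        rw [pge_sum_eval2 ((Finset.mem_erase.mp hb').1.symm) (pgeSgm S b) (pgeSgm S b'),
          pge_sum_sgm, pge_sum_sgm]
        ring_nf :
        ∀ b' ∈ Finset.univ.erase b,
          ∑ u : Fin m → Fin n, pgeSgm S b (u b) * pgeSgm S b' (u b')
          = (n^(m-2) : ℝ) * (S.card:ℝ)^2)]
      rw [Finset.sum_const, Finset.card_erase_of_mem (Finset.mem_univ b),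
        Finset.card_univ, Fintype.card_fin, nsmul_eq_mul]
      have : ((m - 1 : ℕ) : ℝ) = (m:ℝ) - 1 := by
        have h1 : (1:ℕ) ≤ m := hm
        push_cast [Nat.cast_sub h1]
        ring
      rw [this]
    rw [diag, offd]
  rw [Finset.sum_congr rfl fun b _ => inner b, Finset.sum_add_distrib,
    ← Finset.mul_sum, Finset.sum_const, Finset.card_univ, Fintype.card_fin, nsmul_eq_mul]
  ring

private lemma pge_energy_bound (hm : 2 ≤ m) :
    (∑ b, ∑ i, (pgeSgm S b i)^2) * ((n:ℝ)^m)
      ≤ (n^(m-1) : ℝ) * S.card * ((n:ℝ)^m)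
        + (n^(m-1):ℝ) * ((m:ℝ)-1) * (S.card:ℝ)^2 := by
  rcases Nat.eq_zero_or_pos n with hn | hn
  · subst hn
    simp [zero_pow, show m ≠ 0 by omega, show m - 1 ≠ 0 by omega]
  set N : ℝ := (n:ℝ)^(m-1) with hN
  set Nn : ℝ := (n:ℝ)^m with hNn
  set M2 : ℝ := (n:ℝ)^(m-2) with hM2
  set E : ℝ := ∑ b, ∑ i, (pgeSgm S b i)^2 with hE
  set S1 : ℝ := (S.card : ℝ) with hS1
  have hNpos : 0 < N := by positivity
  have hNnpos : 0 < Nn := by positivity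
  have hM2Nn : M2 * Nn = N^2 := by
    rw [hM2, hNn, hN, ← pow_add, ← pow_mul]
    congr 1
    omega
  set ind : (Fin m → Fin n) → ℝ := fun u => if u ∈ S then (1:ℝ) else 0 with hind
  set q : (Fin m → Fin n) → ℝ :=
    fun u => Nn*N*ind u - Nn * pgeT S u + ((m:ℝ)-1)*S1*N with hq
  have h0 : 0 ≤ ∑ u : Fin m → Fin n, (q u)^2 :=
    Finset.sum_nonneg fun u _ => sq_nonneg _
  have hind1 : ∑ u : Fin m → Fin n, ind u = S1 := by
    rw [hind, hS1]
    rw [Finset.sum_ite_mem, Finset.univ_inter, Finset.sum_const, nsmul_eq_mul, mul_one]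
  have hind2 : ∑ u : Fin m → Fin n, (ind u)^2 = S1 := by
    rw [show (fun u : Fin m → Fin n => (ind u)^2) = ind from ?_, hind1]
    funext u
    by_cases h : u ∈ S <;> simp [hind, h]
  have hindT : ∑ u : Fin m → Fin n, ind u * pgeT S u = E := by
    rw [show (fun u : Fin m → Fin n => ind u * pgeT S u)
        = (fun u : Fin m → Fin n => if u ∈ S then pgeT S u else 0) from ?_]
    · rw [Finset.sum_ite_mem, Finset.univ_inter, pge_sum_t_S]
    · funext u
      by_cases h : u ∈ S <;> simp [hind, h]
  have hcard : ((Finset.univ : Finset (Fin m → Fin n)).card : ℝ) = Nn := by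
    rw [Finset.card_univ, Fintype.card_fun, Fintype.card_fin, Fintype.card_fin, hNn]
    push_cast
    ring
  have hT1 : ∑ u : Fin m → Fin n, pgeT S u = (m : ℝ) * N * S1 := pge_sum_t_univ S
  have hT2 : ∑ u : Fin m → Fin n, (pgeT S u)^2
      = N * E + (m : ℝ) * ((m:ℝ) - 1) * M2 * S1^2 := pge_sum_t_sq S (by omega)
  have hsum : ∑ u : Fin m → Fin n, (q u)^2
      = (Nn*N)^2*S1 - 2*Nn*N*Nn*E + 2*(Nn*N)*(((m:ℝ)-1)*S1*N)*S1
        + Nn^2*(N * E + (m : ℝ) * ((m:ℝ) - 1) * M2 * S1^2)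
        - 2*Nn*(((m:ℝ)-1)*S1*N)*((m:ℝ)*N*S1) + (((m:ℝ)-1)*S1*N)^2 * Nn := by
    have hpt : ∀ u : Fin m → Fin n, (q u)^2
        = (Nn*N)^2*(ind u)^2 - 2*Nn*N*Nn*(ind u * pgeT S u)
          + 2*(Nn*N)*(((m:ℝ)-1)*S1*N)*(ind u) + Nn^2*(pgeT S u)^2
          - 2*Nn*(((m:ℝ)-1)*S1*N)*(pgeT S u) + (((m:ℝ)-1)*S1*N)^2 := by
      intro u
      rw [hq]
      ring
    rw [Finset.sum_congr rfl fun u _ => hpt u]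
    simp only [Finset.sum_add_distrib, Finset.sum_sub_distrib, ← Finset.mul_sum,
      Finset.sum_const, nsmul_eq_mul]
    rw [hind1, hind2, hindT, hT1, hT2, hcard]
    ring
  have hX : 0 ≤ (Nn*N) * ((N*S1*Nn + ((m:ℝ)-1)*N*S1^2) - E*Nn) := by
    have heq : (Nn*N) * ((N*S1*Nn + ((m:ℝ)-1)*N*S1^2) - E*Nn)
        = (Nn*N)^2*S1 - 2*Nn*N*Nn*E + 2*(Nn*N)*(((m:ℝ)-1)*S1*N)*S1
          + Nn^2*(N * E + (m : ℝ) * ((m:ℝ) - 1) * M2 * S1^2)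
          - 2*Nn*(((m:ℝ)-1)*S1*N)*((m:ℝ)*N*S1) + (((m:ℝ)-1)*S1*N)^2 * Nn := by
      linear_combination (-((m:ℝ)*((m:ℝ)-1)*Nn*S1^2)) * hM2Nn
    rw [heq, ← hsum]
    exact h0
  have hX2 : 0 ≤ (N*S1*Nn + ((m:ℝ)-1)*N*S1^2) - E*Nn :=
    nonneg_of_mul_nonneg_right hX (by positivity)
  linarith

private lemma pge_gamma_count (T : Finset (Fin m × Fin n)) :
    ((Finset.univ.filter (fun p : (Fin m → Fin n) × Fin m =>
        Xor (p.1 ∈ S) ((p.2, p.1 p.2) ∈ T))).card : ℝ)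
      = ∑ b, ∑ i, (if (b,i) ∈ T then ((n:ℝ)^(m-1)) - pgeSgm S b i else pgeSgm S b i) := by
  rw [← Finset.sum_boole]
  rw [Fintype.sum_prod_type, Finset.sum_comm]
  refine Finset.sum_congr rfl fun b _ => ?_
  rw [← Finset.sum_fiberwise Finset.univ (fun u : Fin m → Fin n => u b)
    (fun u => if Xor (u ∈ S) ((b, u b) ∈ T) then (1:ℝ) else 0)]
  refine Finset.sum_congr rfl fun i _ => ?_
  have hfS : (Finset.univ.filter (fun u : Fin m → Fin n => u b = i)) ∩ S
      = S.filter (fun u => u b = i) := by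
    ext u; simp [and_comm]
  by_cases hT : (b,i) ∈ T
  · rw [if_pos hT]
    rw [Finset.sum_congr rfl (fun u hu => by
      rw [(Finset.mem_filter.mp hu).2]
      by_cases hu2 : u ∈ S <;> simp [Xor, hu2, hT] :
      ∀ u ∈ Finset.univ.filter (fun u : Fin m → Fin n => u b = i),
        (if Xor (u ∈ S) ((b, u b) ∈ T) then (1:ℝ) else 0)
          = 1 - (if u ∈ S then (1:ℝ) else 0))]
    rw [Finset.sum_sub_distrib, Finset.sum_const, Finset.sum_ite_mem, hfS,
      Finset.sum_const, pge_card_fiber1, nsmul_eq_mul, nsmul_eq_mul, mul_one, mul_one]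
    unfold pgeSgm
    push_cast
    ring
  · rw [if_neg hT]
    rw [Finset.sum_congr rfl (fun u hu => by
      rw [(Finset.mem_filter.mp hu).2]
      by_cases hu2 : u ∈ S <;> simp [Xor, hu2, hT] :
      ∀ u ∈ Finset.univ.filter (fun u : Fin m → Fin n => u b = i),
        (if Xor (u ∈ S) ((b, u b) ∈ T) then (1:ℝ) else 0)
          = (if u ∈ S then (1:ℝ) else 0))]
    rw [Finset.sum_ite_mem, hfS, Finset.sum_const, nsmul_eq_mul, mul_one]
    rfl

end ProductGraphExpansionAux

set_option maxHeartbeats 1000000 in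
/-- Expansion of the product-test graph `G^n_m` (m ≥ 3), the bipartite
incidence graph between points `[n]^m` (left, degree `m`) and axis-parallel hyperplanes
`[m] × [n]` (right, degree `n^{m-1}`), point `u` adjacent to plane `(b,i)` iff `u b = i`.
Edges are identified with pairs `(u, b)`, the corresponding plane being `(b, u b)`.
For `S ⊆ L` with `|S| ≤ |L|/4` and any `T ⊆ R`, the number of edges with exactly one
endpoint in `S ∪ T` is at least `(m/8)|S| + (n^{m-1}/8)|T|`. -/
theorem product_graph_expansion {n m : ℕ} (hm : 3 ≤ m)
    (S : Finset (Fin m → Fin n)) (T : Finset (Fin m × Fin n))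
    (hS : (S.card : ℝ) ≤ (n ^ m : ℝ) / 4) :
    (m : ℝ) / 8 * S.card + ((n : ℝ) ^ (m - 1)) / 8 * T.card ≤
      ((Finset.univ.filter (fun p : (Fin m → Fin n) × Fin m =>
        Xor (p.1 ∈ S) ((p.2, p.1 p.2) ∈ T))).card : ℝ) := by
  rcases Nat.eq_zero_or_pos n with hn | hn
  · subst hn
    have hS0 : S.card = 0 := by
      have h := Finset.card_le_univ S
      rw [Fintype.card_fun, Fintype.card_fin, Fintype.card_fin,
        zero_pow (by omega : m ≠ 0)] at h
      omega
    have hT0 : T.card = 0 := by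
      have h := Finset.card_le_univ T
      rw [Fintype.card_prod, Fintype.card_fin, Fintype.card_fin, Nat.mul_zero] at h
      omega
    rw [hS0, hT0]
    simp
  -- main case
  set N : ℝ := (n:ℝ)^(m-1) with hN
  set Nn : ℝ := (n:ℝ)^m with hNn
  have hNpos : 0 < N := by positivity
  have hNnpos : 0 < Nn := by positivity
  set E : ℝ := ∑ b, ∑ i, (pgeSgm S b i)^2 with hE
  rw [pge_gamma_count S T]
  have hlow : ∀ b i, pgeSgm S b i - (8/7)/N*(pgeSgm S b i)^2
      + (if (b,i) ∈ T then N/8 else 0)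
      ≤ (if (b,i) ∈ T then N - pgeSgm S b i else pgeSgm S b i) := by
    intro b i
    by_cases hT : (b,i) ∈ T
    · rw [if_pos hT, if_pos hT]
      have hnn : 0 ≤ (8/(7*N)) * (pgeSgm S b i - (7/8)*N)^2 := by positivity
      have heq : N - pgeSgm S b i
          - (pgeSgm S b i - (8/7)/N*(pgeSgm S b i)^2 + N/8)
          = (8/(7*N)) * (pgeSgm S b i - (7/8)*N)^2 := by
        field_simp
        ring
      linarith
    · rw [if_neg hT, if_neg hT]
      have hnn : 0 ≤ (8/7)/N*(pgeSgm S b i)^2 := by positivity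
      linarith
  have hsum_low : ∑ b, ∑ i, (pgeSgm S b i - (8/7)/N*(pgeSgm S b i)^2
        + (if (b,i) ∈ T then N/8 else 0))
      ≤ ∑ b, ∑ i, (if (b,i) ∈ T then N - pgeSgm S b i else pgeSgm S b i) :=
    Finset.sum_le_sum fun b _ => Finset.sum_le_sum fun i _ => hlow b i
  have h1 : ∑ b, ∑ i, pgeSgm S b i = (m:ℝ) * S.card := by
    rw [Finset.sum_congr rfl fun b _ => pge_sum_sgm S b, Finset.sum_const,
      Finset.card_univ, Fintype.card_fin, nsmul_eq_mul]
  have h2 : ∑ b, ∑ i, (8/7)/N*(pgeSgm S b i)^2 = (8/7)/N * E := by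
    rw [hE, Finset.mul_sum]
    refine Finset.sum_congr rfl fun b _ => ?_
    rw [Finset.mul_sum]
  have h3 : ∑ b : Fin m, ∑ i : Fin n, (if (b,i) ∈ T then N/8 else 0)
      = N/8 * T.card := by
    have h3' : ∑ p : Fin m × Fin n, (if p ∈ T then N/8 else 0)
        = ∑ b : Fin m, ∑ i : Fin n, (if (b,i) ∈ T then N/8 else 0) :=
      Fintype.sum_prod_type _
    rw [← h3', Finset.sum_ite_mem, Finset.univ_inter, Finset.sum_const, nsmul_eq_mul]
    ring
  have hsplit : ∑ b, ∑ i, (pgeSgm S b i - (8/7)/N*(pgeSgm S b i)^2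
        + (if (b,i) ∈ T then N/8 else 0))
      = (m:ℝ) * S.card - (8/7)/N * E + N/8 * T.card := by
    simp only [Finset.sum_add_distrib, Finset.sum_sub_distrib]
    rw [h1, h2, h3]
  have hEb : E * Nn ≤ N * S.card * Nn + N*((m:ℝ)-1)*(S.card:ℝ)^2 :=
    pge_energy_bound S (by omega)
  have hm3 : (3:ℝ) ≤ (m:ℝ) := by exact_mod_cast hm
  have hSc : (0:ℝ) ≤ (S.card:ℝ) := Nat.cast_nonneg _
  have hTc : (0:ℝ) ≤ (T.card:ℝ) := Nat.cast_nonneg _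
  have hS4 : (S.card : ℝ) ≤ Nn / 4 := hS
  have hE2 : E ≤ N * S.card * ((m:ℝ)+3)/4 := by
    have h4 : N*((m:ℝ)-1)*(S.card:ℝ)^2 ≤ N*((m:ℝ)-1)*(S.card:ℝ)*(Nn/4) := by
      have hco : 0 ≤ N*((m:ℝ)-1)*(S.card:ℝ) := by
        apply mul_nonneg (mul_nonneg hNpos.le (by linarith)) hSc
      nlinarith [hS4]
    have h5 : E * Nn ≤ (N * S.card * ((m:ℝ)+3)/4) * Nn := by
      have : N * S.card * Nn + N*((m:ℝ)-1)*(S.card:ℝ)*(Nn/4)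
          = (N * S.card * ((m:ℝ)+3)/4) * Nn := by ring
      linarith
    exact le_of_mul_le_mul_right h5 hNnpos
  have hfrac : (8/7)/N * E ≤ (2/7)*((m:ℝ)+3)*(S.card:ℝ) := by
    have h6 : (8/7)/N * E ≤ (8/7)/N * (N * S.card * ((m:ℝ)+3)/4) :=
      mul_le_mul_of_nonneg_left hE2 (by positivity)
    have h7 : (8/7)/N * (N * S.card * ((m:ℝ)+3)/4) = (2/7)*((m:ℝ)+3)*(S.card:ℝ) := by
      field_simp
      ring
    linarith
  have hfin : (m:ℝ)/8 * S.card ≤ (m:ℝ) * S.card - (2/7)*((m:ℝ)+3)*(S.card:ℝ) := by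
    have hco : 0 ≤ (33/56*(m:ℝ) - 6/7) := by linarith
    nlinarith [mul_nonneg hco hSc]
  linarith
end

section
/- Self-improvement via expansion: Let m be a positive integer and C an [n,k,d] code over Σ with (d/n)^{m-1} ≥ 7/8. If r ∈ Σ^{[n]^m} and c ∈ C^m satisfy δ(r,c) ≤ 1/4, then δ(r,c) ≤ 8·ρ(r), where ρ(r) = E_{b∈[m], i∈[n]}[δ_{C^{m-1}}(r_{b,i})] is the expected robustness of the m-Product Tester on r. -/
/-- The `m`-fold tensor power `C^m` of a code `C ⊆ F^n`. -/
def tensorPow {F : Type} {n : ℕ} (C : Set (Fin n → F)) (m : ℕ) :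
    Set ((Fin m → Fin n) → F) :=
  {r | ∀ (b : Fin m) (x : Fin m → Fin n), (fun i => r (Function.update x b i)) ∈ C}

/-- The slice `r_{b,i}`: fix the `b`-th coordinate of the array to `i`. -/
def sliceAt {F : Type} {n m : ℕ} (r : (Fin (m + 1) → Fin n) → F) (b : Fin (m + 1)) (i : Fin n) :
    (Fin m → Fin n) → F :=
  fun x => r (b.insertNth i x)

/-! ### Auxiliary lemmas -/

noncomputable def gfun (t : ℝ) : ℝ := min t (max (7/8 - t) 0)

lemma gfun_nonneg {t : ℝ} (ht : 0 ≤ t) : 0 ≤ gfun t := le_min ht (le_max_right _ _)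

lemma gfun_light {t : ℝ} (ht : t ≤ 7/16) : gfun t = t := by
  unfold gfun
  rw [min_eq_left]
  rcases le_or_gt 0 (7/8 - t) with h | h
  · rw [max_eq_left h]; linarith
  · linarith

lemma gfun_heavy {t : ℝ} (ht0 : 0 ≤ t) (ht : 7/16 < t) : 7/8 ≤ t + gfun t := by
  unfold gfun
  rcases le_or_gt 0 (7/8 - t) with h | h
  · rw [max_eq_left h, min_eq_right (by linarith)]; linarith
  · linarith [le_min ht0 (le_max_right (7/8 - t) 0)]

lemma insertNth_update' {n m : ℕ} (b : Fin (m+1)) (i : Fin n) (x : Fin m → Fin n)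
    (b'' : Fin m) (j : Fin n) :
    b.insertNth i (Function.update x b'' j) =
      Function.update (b.insertNth i x : Fin (m+1) → Fin n) (b.succAbove b'') j := by
  ext k
  cases k using b.succAboveCases with
  | x => simp [Function.update_apply, (Fin.succAbove_ne b b'').symm]
  | p t =>
    rcases eq_or_ne t b'' with rfl | ht
    · simp
    · simp [Function.update_apply, ht, (Fin.succAbove_right_injective (p := b)).ne ht]

lemma sliceAt_mem {F : Type} {n m : ℕ} {C : Set (Fin n → F)}
    {c : (Fin (m + 1) → Fin n) → F} (hc : c ∈ tensorPow C (m+1))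
    (b : Fin (m+1)) (i : Fin n) : sliceAt c b i ∈ tensorPow C m := by
  intro b'' x
  have := hc (b.succAbove b'') (b.insertNth i x)
  simpa [sliceAt, insertNth_update'] using this

lemma fiber_card {F : Type} [DecidableEq F] {n m : ℕ}
    (f g : (Fin (m + 1) → Fin n) → F) (b : Fin (m+1)) (i : Fin n) :
    ({x : Fin (m+1) → Fin n | f x ≠ g x ∧ x b = i} : Finset _).card
      = hammingDist (sliceAt f b i) (sliceAt g b i) := by
  rw [hammingDist]
  apply Finset.card_bij (fun x _ => b.removeNth x)
  · intro x hx
    simp only [Finset.mem_filter, Finset.mem_univ, true_and] at hx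
    obtain ⟨hne, hb⟩ := hx
    rw [Finset.mem_filter]
    simp only [Finset.mem_univ, true_and, sliceAt]
    rw [← hb, Fin.insertNth_self_removeNth]
    exact hne
  · intro x hx y hy hxy
    simp only [Finset.mem_filter, Finset.mem_univ, true_and] at hx hy
    calc x = b.insertNth (x b) (b.removeNth x) := (Fin.insertNth_self_removeNth b x).symm
    _ = b.insertNth (y b) (b.removeNth y) := by rw [hx.2, hy.2, hxy]
    _ = y := Fin.insertNth_self_removeNth b y
  · intro y hy
    rw [Finset.mem_filter] at hy
    simp only [Finset.mem_univ, true_and, sliceAt] at hy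
    refine ⟨b.insertNth i y, ?_, ?_⟩
    · simp only [Finset.mem_filter, Finset.mem_univ, true_and]
      exact ⟨hy, by simp⟩
    · simp

lemma hamming_partition {F : Type} [DecidableEq F] {n m : ℕ}
    (f g : (Fin (m + 1) → Fin n) → F) (b : Fin (m+1)) :
    hammingDist f g
      = ∑ i : Fin n, hammingDist (sliceAt f b i) (sliceAt g b i) := by
  simp_rw [← fiber_card]
  rw [hammingDist]
  rw [Finset.card_eq_sum_card_fiberwise (f := fun x => x b) (t := Finset.univ)
    (fun x _ => Finset.mem_univ _)]
  congr 1
  ext i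
  rw [Finset.filter_filter]

lemma row_sum_P {F : Type} [DecidableEq F] {n m : ℕ}
    (f g : (Fin (m + 1) → Fin n) → F) (b b' : Fin (m+1)) (i : Fin n) :
    ∑ j : Fin n, ({x : Fin (m+1) → Fin n | f x ≠ g x ∧ x b = i ∧ x b' = j} : Finset _).card
      = ({x : Fin (m+1) → Fin n | f x ≠ g x ∧ x b = i} : Finset _).card := by
  rw [Finset.card_eq_sum_card_fiberwise (f := fun x => x b') (t := Finset.univ)
    (fun x _ => Finset.mem_univ _)]
  apply Finset.sum_congr rfl
  intro j _
  congr 1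
  rw [Finset.filter_filter]
  apply Finset.filter_congr
  intro x _
  simp [and_assoc]

lemma col_sum_P {F : Type} [DecidableEq F] {n m : ℕ}
    (f g : (Fin (m + 1) → Fin n) → F) (b b' : Fin (m+1)) (j : Fin n) :
    ∑ i : Fin n, ({x : Fin (m+1) → Fin n | f x ≠ g x ∧ x b = i ∧ x b' = j} : Finset _).card
      = ({x : Fin (m+1) → Fin n | f x ≠ g x ∧ x b' = j} : Finset _).card := by
  rw [Finset.card_eq_sum_card_fiberwise (f := fun x => x b) (t := Finset.univ)
    (fun x _ => Finset.mem_univ _)]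
  apply Finset.sum_congr rfl
  intro i _
  congr 1
  rw [Finset.filter_filter]
  apply Finset.filter_congr
  intro x _
  tauto

lemma card_coord_fiber {n m : ℕ} (b : Fin (m+1)) (i : Fin n) :
    ({x : Fin (m+1) → Fin n | x b = i} : Finset _).card = n ^ m := by
  have hcard : Fintype.card (Fin m → Fin n) = n ^ m := by
    simp [Fintype.card_fun]
  rw [← hcard, ← Finset.card_univ (α := Fin m → Fin n)]
  apply Finset.card_bij (fun x _ => b.removeNth x)
  · intro x hx; exact Finset.mem_univ _
  · intro x hx y hy hxy
    simp only [Finset.mem_filter, Finset.mem_univ, true_and] at hx hy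
    calc x = b.insertNth (x b) (b.removeNth x) := (Fin.insertNth_self_removeNth b x).symm
    _ = b.insertNth (y b) (b.removeNth y) := by rw [hx, hy, hxy]
    _ = y := Fin.insertNth_self_removeNth b y
  · intro y _
    exact ⟨b.insertNth i y, by simp [Finset.mem_filter], by simp⟩

lemma P_le {F : Type} [DecidableEq F] {n m : ℕ}
    (f g : (Fin (m + 1) → Fin n) → F) {b b' : Fin (m+1)} (hbb : b ≠ b')
    (i j : Fin n) :
    n * ({x : Fin (m+1) → Fin n | f x ≠ g x ∧ x b = i ∧ x b' = j} : Finset _).card ≤ n ^ m := by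
  rw [← card_coord_fiber b i]
  have h1 : n * ({x : Fin (m+1) → Fin n | f x ≠ g x ∧ x b = i ∧ x b' = j} : Finset _).card
      = ((Finset.univ : Finset (Fin n)) ×ˢ
        ({x : Fin (m+1) → Fin n | f x ≠ g x ∧ x b = i ∧ x b' = j} : Finset _)).card := by
    rw [Finset.card_product, Finset.card_univ, Fintype.card_fin]
  rw [h1]
  apply Finset.card_le_card_of_injOn (fun p => Function.update p.2 b' p.1)
  · rintro ⟨a, x⟩ hp
    simp only [Finset.mem_coe, Finset.mem_product, Finset.mem_filter, Finset.mem_univ, true_and] at hp ⊢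
    rw [Function.update_apply, if_neg hbb]
    exact hp.2.1
  · rintro ⟨a, x⟩ hp ⟨a2, y⟩ hq heq
    dsimp only at heq
    simp only [Finset.mem_coe, Finset.mem_product, Finset.mem_filter, Finset.mem_univ,
      true_and] at hp hq
    have ha : a = a2 := by
      have := congrFun heq b'
      simpa using this
    have hx : x = y := by
      have h1 : Function.update (Function.update x b' a) b' (j : Fin n) = x := by
        rw [Function.update_idem, ← hp.2.2, Function.update_eq_self]
      have h2 : Function.update (Function.update y b' a2) b' (j : Fin n) = y := by
        rw [Function.update_idem, ← hq.2.2, Function.update_eq_self]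
      rw [← h1, ← h2, heq]
    rw [ha, hx]

lemma tensor_minDist {F : Type} [DecidableEq F] {n d : ℕ} {C : Set (Fin n → F)}
    (hdist : ∀ x ∈ C, ∀ y ∈ C, x ≠ y → d ≤ hammingDist x y) :
    ∀ m (w w' : (Fin m → Fin n) → F), w ∈ tensorPow C m → w' ∈ tensorPow C m →
      w ≠ w' → d ^ m ≤ hammingDist w w' := by
  intro m
  induction m with
  | zero =>
    intro w w' _ _ hne
    simpa [pow_zero, Nat.one_le_iff_ne_zero, hammingDist_ne_zero] using hne
  | succ m ih =>
    intro w w' hw hw' hne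
    obtain ⟨x₀, hx₀⟩ := Function.ne_iff.mp hne
    set f : Fin n → F := fun i => w (Function.update x₀ 0 i) with hf
    set f' : Fin n → F := fun i => w' (Function.update x₀ 0 i) with hf'
    have hfC : f ∈ C := hw 0 x₀
    have hf'C : f' ∈ C := hw' 0 x₀
    have hff' : f ≠ f' := by
      intro h
      apply hx₀
      have := congrFun h (x₀ 0)
      simpa [hf, hf', Function.update_eq_self] using this
    have hdle : d ≤ hammingDist f f' := hdist f hfC f' hf'C hff'
    have hslice : ∀ i : Fin n, f i ≠ f' i →
        d ^ m ≤ hammingDist (sliceAt w 0 i) (sliceAt w' 0 i) := by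
      intro i hi
      apply ih _ _ (sliceAt_mem hw 0 i) (sliceAt_mem hw' 0 i)
      intro h
      apply hi
      have h2 := congrFun h ((0 : Fin (m+1)).removeNth x₀)
      simp only [sliceAt] at h2
      rw [Fin.insertNth_removeNth] at h2
      exact h2
    calc d ^ (m + 1) = d * d ^ m := by ring
    _ ≤ hammingDist f f' * d ^ m := Nat.mul_le_mul_right _ hdle
    _ = ∑ i ∈ Finset.filter (fun i => f i ≠ f' i) Finset.univ, d ^ m := by
        rw [Finset.sum_const, hammingDist]; ring
    _ ≤ ∑ i ∈ Finset.filter (fun i => f i ≠ f' i) Finset.univ,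
          hammingDist (sliceAt w 0 i) (sliceAt w' 0 i) := by
        apply Finset.sum_le_sum
        intro i hi
        exact hslice i (by simpa using (Finset.mem_filter.mp hi).2)
    _ ≤ ∑ i : Fin n, hammingDist (sliceAt w 0 i) (sliceAt w' 0 i) :=
        Finset.sum_le_sum_of_subset (Finset.subset_univ _)
    _ = hammingDist w w' := (hamming_partition w w' 0).symm

set_option maxHeartbeats 1000000 in
lemma pair_bound {n : ℕ} (u v : Fin n → ℝ) (M : Fin n → Fin n → ℝ)
    (hu0 : ∀ i, 0 ≤ u i) (hv0 : ∀ j, 0 ≤ v j)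
    (hM0 : ∀ i j, 0 ≤ M i j) (hM1 : ∀ i j, M i j ≤ 1)
    (hrow : ∀ i, ∑ j, M i j = n * u i) (hcol : ∀ j, ∑ i, M i j = n * v j)
    (huv : ∑ i, u i = ∑ j, v j) (hTn : ∑ i, u i ≤ n / 4) :
    (∑ i, u i) / 4 ≤ ∑ i, gfun (u i) + ∑ j, gfun (v j) := by
  by_contra hcon
  push_neg at hcon
  set T := ∑ i, u i with hTdef
  set A := ∑ i, gfun (u i) with hA
  set B := ∑ j, gfun (v j) with hB
  have hA0 : 0 ≤ A := Finset.sum_nonneg fun i _ => gfun_nonneg (hu0 i)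
  have hB0 : 0 ≤ B := Finset.sum_nonneg fun j _ => gfun_nonneg (hv0 j)
  have hT0 : 0 < T := by linarith
  set H := Finset.filter (fun i => 7/16 < u i) Finset.univ with hH
  set Fs := Finset.filter (fun j => 7/16 < v j) Finset.univ with hF
  set ℓ := ∑ i ∈ Hᶜ, u i with hℓ
  have hℓ0 : 0 ≤ ℓ := Finset.sum_nonneg fun i _ => hu0 i
  have hAsplit : A = (∑ i ∈ H, gfun (u i)) + ℓ := by
    rw [hA, ← Finset.sum_add_sum_compl H]
    congr 1
    apply Finset.sum_congr rfl
    intro i hi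
    simp only [hH, Finset.mem_compl, Finset.mem_filter, Finset.mem_univ, true_and,
      not_lt] at hi
    exact gfun_light hi
  have hgH0 : 0 ≤ ∑ i ∈ H, gfun (u i) := Finset.sum_nonneg fun i _ => gfun_nonneg (hu0 i)
  have hℓA : ℓ ≤ A := by linarith [hAsplit, hgH0]
  have hTsplit : (∑ i ∈ H, u i) = T - ℓ := by
    have h := Finset.sum_add_sum_compl H u
    linarith
  have hcardH : (7:ℝ)/8 * H.card ≤ (T - ℓ) + (A - ℓ) := by
    have h1 : ∀ i ∈ H, (7:ℝ)/8 ≤ u i + gfun (u i) := by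
      intro i hi
      simp only [hH, Finset.mem_filter, Finset.mem_univ, true_and] at hi
      exact gfun_heavy (hu0 i) hi
    calc (7:ℝ)/8 * H.card = ∑ _i ∈ H, (7:ℝ)/8 := by
          rw [Finset.sum_const, nsmul_eq_mul]; ring
    _ ≤ ∑ i ∈ H, (u i + gfun (u i)) := Finset.sum_le_sum h1
    _ = (∑ i ∈ H, u i) + (∑ i ∈ H, gfun (u i)) := Finset.sum_add_distrib
    _ ≤ (T - ℓ) + (A - ℓ) := by
        rw [hTsplit]
        have : (∑ i ∈ H, gfun (u i)) = A - ℓ := by linarith [hAsplit]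
        linarith [this]
  set massF := ∑ j ∈ Fs, v j with hmF
  have hTv : ∑ j, v j = T := huv.symm
  have hBsplit : B = (∑ j ∈ Fs, gfun (v j)) + (T - massF) := by
    rw [hB, ← Finset.sum_add_sum_compl Fs]
    congr 1
    have h3 : ∑ j ∈ Fsᶜ, gfun (v j) = ∑ j ∈ Fsᶜ, v j := by
      apply Finset.sum_congr rfl
      intro j hj
      simp only [hF, Finset.mem_compl, Finset.mem_filter, Finset.mem_univ, true_and,
        not_lt] at hj
      exact gfun_light hj
    rw [h3]
    have h4 := Finset.sum_add_sum_compl Fs v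
    rw [hTv] at h4
    linarith [h4]
  have hgF0 : 0 ≤ ∑ j ∈ Fs, gfun (v j) := Finset.sum_nonneg fun j _ => gfun_nonneg (hv0 j)
  have hmassB : T - massF ≤ B := by linarith [hBsplit, hgF0]
  have hmassT : massF ≤ T := by
    rw [hmF, ← hTv]
    exact Finset.sum_le_sum_of_subset_of_nonneg (Finset.subset_univ _) (fun j _ _ => hv0 j)
  have hcardF : (7:ℝ)/8 * Fs.card ≤ massF + B := by
    have h1 : ∀ j ∈ Fs, (7:ℝ)/8 ≤ v j + gfun (v j) := by
      intro j hj
      simp only [hF, Finset.mem_filter, Finset.mem_univ, true_and] at hj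
      exact gfun_heavy (hv0 j) hj
    calc (7:ℝ)/8 * Fs.card = ∑ _j ∈ Fs, (7:ℝ)/8 := by
          rw [Finset.sum_const, nsmul_eq_mul]; ring
    _ ≤ ∑ j ∈ Fs, (v j + gfun (v j)) := Finset.sum_le_sum h1
    _ = massF + (∑ j ∈ Fs, gfun (v j)) := by rw [Finset.sum_add_distrib]
    _ ≤ massF + B := by
        have : (∑ j ∈ Fs, gfun (v j)) ≤ B := by linarith [hBsplit, hmassT, hmF]
        linarith
  have hexp : (n:ℝ) * massF ≤ (Fs.card : ℝ) * H.card + n * ℓ := by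
    have step1 : (n:ℝ) * massF = ∑ j ∈ Fs, ∑ i, M i j := by
      rw [hmF, Finset.mul_sum]
      apply Finset.sum_congr rfl
      intro j _
      rw [hcol j]
    have step2 : ∀ j ∈ Fs, ∑ i, M i j ≤ (H.card : ℝ) + ∑ i ∈ Hᶜ, M i j := by
      intro j _
      rw [← Finset.sum_add_sum_compl H (f := fun i => M i j)]
      have : ∑ i ∈ H, M i j ≤ (H.card : ℝ) := by
        calc ∑ i ∈ H, M i j ≤ ∑ _i ∈ H, (1:ℝ) := Finset.sum_le_sum fun i _ => hM1 i j
        _ = H.card := by rw [Finset.sum_const, nsmul_eq_mul]; ring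
      linarith
    have step3 : ∑ j ∈ Fs, ∑ i ∈ Hᶜ, M i j ≤ n * ℓ := by
      calc ∑ j ∈ Fs, ∑ i ∈ Hᶜ, M i j
          ≤ ∑ j, ∑ i ∈ Hᶜ, M i j := by
            apply Finset.sum_le_sum_of_subset_of_nonneg (Finset.subset_univ _)
            intro j _ _
            exact Finset.sum_nonneg fun i _ => hM0 i j
      _ = ∑ i ∈ Hᶜ, ∑ j, M i j := Finset.sum_comm
      _ = ∑ i ∈ Hᶜ, (n:ℝ) * u i := by
            apply Finset.sum_congr rfl; intro i _; exact hrow i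
      _ = n * ℓ := by rw [hℓ, Finset.mul_sum]
    calc (n:ℝ) * massF = ∑ j ∈ Fs, ∑ i, M i j := step1
    _ ≤ ∑ j ∈ Fs, ((H.card : ℝ) + ∑ i ∈ Hᶜ, M i j) := Finset.sum_le_sum step2
    _ = (Fs.card : ℝ) * H.card + ∑ j ∈ Fs, ∑ i ∈ Hᶜ, M i j := by
        rw [Finset.sum_add_distrib, Finset.sum_const, nsmul_eq_mul]
    _ ≤ (Fs.card : ℝ) * H.card + n * ℓ := by linarith [step3]
  have hcH0 : (0:ℝ) ≤ H.card := Nat.cast_nonneg _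
  have hcF0 : (0:ℝ) ≤ Fs.card := Nat.cast_nonneg _
  have hn4 : 4 * T ≤ (n:ℝ) := by linarith
  have hprod : (Fs.card : ℝ) * H.card ≤ (8/7 * (T + B)) * (8/7 * ((T - ℓ) + (A - ℓ))) := by
    apply mul_le_mul
    · linarith [hcardF, hmassT]
    · linarith [hcardH]
    · exact hcH0
    · nlinarith [hcardF, hmassT, hB0, hT0]
  nlinarith [hexp, hprod, hmassB, hℓA, hℓ0, hA0, hB0, hT0, hn4, hcon,
    mul_le_mul_of_nonneg_right hn4 (by linarith : (0:ℝ) ≤ T - B - ℓ),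
    mul_nonneg hA0 hB0, mul_nonneg hB0 hℓ0, sq_nonneg (A + B), sq_nonneg T]

lemma distToCode_lower {ι F : Type} [Fintype ι] [DecidableEq F] {C' : Set (ι → F)} {D : ℕ}
    (hD : ∀ w ∈ C', ∀ w' ∈ C', w ≠ w' → D ≤ hammingDist w w')
    {c' : ι → F} (hc : c' ∈ C') (r' : ι → F)
    (hfrac : (7:ℝ)/8 ≤ (D:ℝ) / Fintype.card ι) :
    gfun (relHammingDist r' c') ≤ distToCode C' r' := by
  have hrelnonneg : ∀ x y : ι → F, 0 ≤ relHammingDist x y := fun x y =>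
    div_nonneg (Nat.cast_nonneg _) (Nat.cast_nonneg _)
  unfold distToCode
  apply le_csInf (Set.nonempty_of_mem (Set.mem_image_of_mem (relHammingDist r') hc))
  rintro y ⟨w, hw, rfl⟩
  rcases eq_or_ne w c' with rfl | hne
  · exact min_le_left _ _
  · refine le_trans (min_le_right _ _) (max_le ?_ (hrelnonneg r' w))
    have hcard0 : (0:ℝ) < Fintype.card ι := by
      rcases Nat.eq_zero_or_pos (Fintype.card ι) with h | h
      · exfalso; rw [h] at hfrac; norm_num at hfrac
      · exact_mod_cast h
    have htri : (hammingDist c' w : ℝ) ≤ (hammingDist c' r' : ℝ) + (hammingDist r' w : ℝ) := by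
      exact_mod_cast hammingDist_triangle c' r' w
    have htri' : relHammingDist c' w ≤ relHammingDist c' r' + relHammingDist r' w := by
      unfold relHammingDist
      rw [← add_div]
      gcongr
    have hDw : (7:ℝ)/8 ≤ relHammingDist c' w := by
      refine le_trans hfrac ?_
      unfold relHammingDist
      gcongr
      exact_mod_cast hD c' hc w hw (Ne.symm hne)
    have hcomm : relHammingDist c' r' = relHammingDist r' c' := by
      unfold relHammingDist; rw [hammingDist_comm]
    linarith
  
/-- Self-improvement via expansion. Let `C` be an `[n,k,d]` code with
`(d/n)^{m-1} ≥ 7/8` (the ambient dimension here is `m+1`, so the exponent is `m`).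
If `r ∈ F^{[n]^{m+1}}` and a codeword `c ∈ C^{m+1}` satisfy `δ(r,c) ≤ 1/4`, then
`δ(r,c) ≤ 8·ρ(r)`, where `ρ(r)` is the expected distance of a uniformly random slice
`r_{b,i}` from `C^m`. -/
theorem self_improvement
    {F : Type} [Field F] [Fintype F] [DecidableEq F] {n k d m : ℕ} (hm : 1 ≤ m)
    (C : Submodule F (Fin n → F))
    (hk : Module.finrank F C = k)
    (hd : minDist (C : Set (Fin n → F)) = d)
    (hdn : (7 : ℝ) / 8 ≤ ((d : ℝ) / n) ^ m)
    (r c : (Fin (m + 1) → Fin n) → F)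
    (hc : c ∈ tensorPow (C : Set (Fin n → F)) (m + 1))
    (hclose : relHammingDist r c ≤ 1 / 4) :
    relHammingDist r c ≤
      8 * ((∑ b : Fin (m + 1), ∑ i : Fin n,
        distToCode (tensorPow (C : Set (Fin n → F)) m) (sliceAt r b i)) / ((m + 1) * n)) := by
  classical
  -- n > 0
  have hn : 0 < n := by
    rcases Nat.eq_zero_or_pos n with h | h
    · exfalso
      subst h
      rw [Nat.cast_zero, div_zero, zero_pow (by omega : m ≠ 0)] at hdn
      norm_num at hdn
    · exact h
  have hnR : (0:ℝ) < n := by exact_mod_cast hn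
  have hnmR : (0:ℝ) < (n:ℝ) ^ m := pow_pos hnR m
  -- base code distance
  have hdistC : ∀ x ∈ (C : Set (Fin n → F)), ∀ y ∈ (C : Set (Fin n → F)),
      x ≠ y → d ≤ hammingDist x y := by
    intro x hx y hy hne
    rw [← hd]
    exact Nat.sInf_le ⟨x, hx, y, hy, hne, rfl⟩
  have htd := tensor_minDist hdistC m
  have hcard1 : Fintype.card (Fin m → Fin n) = n ^ m := by simp [Fintype.card_fun]
  have hcard2 : Fintype.card (Fin (m+1) → Fin n) = n ^ (m+1) := by simp [Fintype.card_fun]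
  have hfrac : (7:ℝ)/8 ≤ ((d ^ m : ℕ) : ℝ) / Fintype.card (Fin m → Fin n) := by
    rw [hcard1]
    push_cast
    rw [← div_pow]
    exact hdn
  -- slice distances
  set t : Fin (m+1) → Fin n → ℝ :=
    fun b i => relHammingDist (sliceAt r b i) (sliceAt c b i) with ht
  have ht0 : ∀ b i, 0 ≤ t b i := fun b i =>
    div_nonneg (Nat.cast_nonneg _) (Nat.cast_nonneg _)
  have htval : ∀ b i, t b i
      = ((hammingDist (sliceAt r b i) (sliceAt c b i) : ℕ) : ℝ) / (n:ℝ)^m := by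
    intro b i
    rw [ht]
    unfold relHammingDist
    rw [hcard1]
    push_cast
    ring
  -- per-slice lower bound on distToCode
  have hslice : ∀ b i, gfun (t b i)
      ≤ distToCode (tensorPow (C : Set (Fin n → F)) m) (sliceAt r b i) := by
    intro b i
    exact distToCode_lower
      (fun w hw w' hw' hne => htd w w' hw hw' hne)
      (sliceAt_mem hc b i) (sliceAt r b i) hfrac
  -- sums of slice distances
  have hsum : ∀ b : Fin (m+1), ∑ i, t b i = ((hammingDist r c : ℕ) : ℝ) / (n:ℝ)^m := by
    intro b
    rw [hamming_partition r c b]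
    push_cast
    rw [Finset.sum_div]
    apply Finset.sum_congr rfl
    intro i _
    rw [htval]
  have hδval : relHammingDist r c = ((hammingDist r c : ℕ) : ℝ) / (n:ℝ)^(m+1) := by
    unfold relHammingDist
    rw [hcard2]
    push_cast
    ring
  have hTle : ((hammingDist r c : ℕ) : ℝ) / (n:ℝ)^m ≤ (n:ℝ)/4 := by
    have h1 : ((hammingDist r c : ℕ) : ℝ) / (n:ℝ)^(m+1) ≤ 1/4 := by
      rw [← hδval]; exact hclose
    have h2 : (n:ℝ)^(m+1) = (n:ℝ)^m * n := by ring
    rw [div_le_div_iff₀ hnmR (by norm_num : (0:ℝ) < 4)]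
    rw [h2, div_le_div_iff₀ (by positivity) (by norm_num : (0:ℝ) < 4)] at h1
    nlinarith [h1]
  -- pair bound for each direction b with b+1
  set G : Fin (m+1) → ℝ := fun b => ∑ i, gfun (t b i) with hG
  have hpair : ∀ b : Fin (m+1),
      (((hammingDist r c : ℕ) : ℝ) / (n:ℝ)^m) / 4 ≤ G b + G (b + 1) := by
    intro b
    have hbb : b ≠ b + 1 := by
      intro h
      have h1 : (1 : Fin (m+1)) = 0 := (left_eq_add.mp h)
      have h2 : (1 : Fin (m+1)).val = (0 : Fin (m+1)).val := congrArg Fin.val h1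
      rw [Fin.val_one', Fin.val_zero] at h2
      have h3 : 1 % (m+1) = 1 := Nat.mod_eq_of_lt (by omega)
      omega
    set P : Fin n → Fin n → ℕ := fun i j =>
      ({x : Fin (m+1) → Fin n | r x ≠ c x ∧ x b = i ∧ x (b+1) = j} : Finset _).card with hP
    have key := pair_bound (t b) (t (b+1))
      (fun i j => (P i j : ℝ) * n / (n:ℝ)^m)
      (ht0 b) (ht0 (b+1))
      (fun i j => by positivity)
      (fun i j => by
        rw [div_le_one hnmR]
        have := P_le r c hbb i j
        calc (P i j : ℝ) * n = ((n * P i j : ℕ) : ℝ) := by push_cast; ring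
        _ ≤ ((n ^ m : ℕ) : ℝ) := by exact_mod_cast this
        _ = (n:ℝ)^m := by push_cast; ring)
      (fun i => by
        rw [← Finset.sum_div, ← Finset.sum_mul]
        have hr : ∑ j, (P i j : ℝ) = (({x : Fin (m+1) → Fin n | r x ≠ c x ∧ x b = i}
            : Finset _).card : ℝ) := by
          rw [← row_sum_P r c b (b+1) i]; push_cast; rfl
        rw [hr, fiber_card r c b i, htval b i]
        field_simp)
      (fun j => by
        rw [← Finset.sum_div, ← Finset.sum_mul]
        have hcsum : ∑ i, (P i j : ℝ) = (({x : Fin (m+1) → Fin n | r x ≠ c x ∧ x (b+1) = j}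
            : Finset _).card : ℝ) := by
          rw [← col_sum_P r c b (b+1) j]; push_cast; rfl
        rw [hcsum, fiber_card r c (b+1) j, htval (b+1) j]
        field_simp)
      (by rw [hsum b, hsum (b+1)])
      (by rw [hsum b]; exact hTle)
    rw [hsum b] at key
    exact key
  -- sum the pair bounds
  have hshift : ∑ b : Fin (m+1), G (b + 1) = ∑ b : Fin (m+1), G b :=
    Fintype.sum_equiv (Equiv.addRight 1) _ _ (fun b => rfl)
  have hsumG : ((m:ℝ)+1) * (((hammingDist r c : ℕ) : ℝ) / (n:ℝ)^m) / 4
      ≤ 2 * ∑ b : Fin (m+1), G b := by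
    have h := Finset.sum_le_sum (fun b (_ : b ∈ Finset.univ) => hpair b)
    rw [Finset.sum_const, Finset.sum_add_distrib, hshift] at h
    simp only [Finset.card_univ, Fintype.card_fin, nsmul_eq_mul] at h
    push_cast at h
    linarith
  -- distToCode sum
  set S := ∑ b : Fin (m+1), ∑ i : Fin n,
    distToCode (tensorPow (C : Set (Fin n → F)) m) (sliceAt r b i) with hS
  have hGS : ∑ b : Fin (m+1), G b ≤ S := by
    apply Finset.sum_le_sum
    intro b _
    apply Finset.sum_le_sum
    intro i _
    exact hslice b i
  -- final algebra
  have hX : (0:ℝ) < ((m:ℝ) + 1) * n := by positivity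
  have hfin : ((m:ℝ)+1) * (((hammingDist r c : ℕ) : ℝ) / (n:ℝ)^m) ≤ 8 * S := by
    linarith [hsumG, hGS]
  rw [hδval]
  calc ((hammingDist r c : ℕ) : ℝ) / (n:ℝ)^(m+1)
      = (((m:ℝ)+1) * (((hammingDist r c : ℕ) : ℝ) / (n:ℝ)^m)) / (((m:ℝ) + 1) * n) := by
        rw [eq_div_iff (ne_of_gt hX)]
        field_simp
        ring
  _ ≤ (8 * S) / (((m:ℝ) + 1) * n) := by gcongr
  _ = 8 * (S / (((m:ℝ) + 1) * n)) := by ring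
end

section
/- In the inconsistency graph G built from r ∈ Σ^{[n]^m} and closest-codeword assignments c_{b,i} ∈ C^{m-1}, every edge is incident to a vertex of degree at least (m−2)d/2. Consequently, the planes (b,i) whose degree in G is less than (m−2)d/2 form an independent set. -/
/-- The inconsistency graph on the planes `[m] × [n]` (ambient dimension `mm+3`), for a
word `r`, threshold `τ` and an assignment of codewords `c b i ∈ C^{mm+2}` to planes:
`(b₁,i₁) ~ (b₂,i₂)` iff one of the two slices is more than `τ`-far from `C^{mm+2}`, or
`b₁ ≠ b₂` and the two assigned codewords disagree at some common point `j ∈ [n]^{mm+3}`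
(the view of `c b i` at `j` being obtained by deleting the `b`-th coordinate of `j`). -/
def InconsAdj {F : Type} [Fintype F] [DecidableEq F] {n mm : ℕ}
    (C : Set (Fin n → F)) (r : (Fin (mm + 3) → Fin n) → F) (τ : ℝ)
    (c : ∀ (_ : Fin (mm + 3)) (_ : Fin n), (Fin (mm + 2) → Fin n) → F)
    (v w : Fin (mm + 3) × Fin n) : Prop :=
  τ < distToCode (tensorPow C (mm + 2)) (sliceAt r v.1 v.2) ∨
  τ < distToCode (tensorPow C (mm + 2)) (sliceAt r w.1 w.2) ∨
  (v.1 ≠ w.1 ∧ ∃ j : Fin (mm + 3) → Fin n, j v.1 = v.2 ∧ j w.1 = w.2 ∧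
    c v.1 v.2 (fun t => j (v.1.succAbove t)) ≠ c w.1 w.2 (fun t => j (w.1.succAbove t)))

/-- The minimum distance of a code is at most the block length. -/
lemma minDist_le_card {ι F : Type} [Fintype ι] [DecidableEq F] (C : Set (ι → F)) :
    minDist C ≤ Fintype.card ι := by
  unfold minDist
  by_cases h : {e | ∃ x ∈ C, ∃ y ∈ C, x ≠ y ∧ hammingDist x y = e}.Nonempty
  · obtain ⟨x, hx, y, hy, hne, he⟩ := Nat.sInf_mem h
    rw [← he]
    exact hammingDist_le_card_fintype
  · rw [Set.not_nonempty_iff_eq_empty.mp h, Nat.sInf_empty]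
    exact Nat.zero_le _

/-- A nonzero codeword of a linear code has weight at least the minimum distance. -/
lemma minDist_le_weight {F ι : Type} [Field F] [Fintype ι] [DecidableEq ι] [DecidableEq F]
    (C : Submodule F (ι → F)) {cw : ι → F} (h : cw ∈ C) (hne : cw ≠ 0) :
    minDist (C : Set (ι → F)) ≤ (Finset.univ.filter fun i => cw i ≠ 0).card := by
  have : minDist (C : Set (ι → F)) ≤ hammingDist cw 0 :=
    Nat.sInf_le ⟨cw, h, 0, C.zero_mem, hne, rfl⟩
  simpa [hammingDist] using this

open scoped Classical in
/-- In the inconsistency graph built from `r` and closest-codeword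
assignments `c b i ∈ C^{m-1}` (ambient dimension `m = mm+3 ≥ 3`), every edge is incident
to a vertex of degree at least `(m−2)d/2`; consequently the planes of degree less than
`(m−2)d/2` form an independent set. -/
theorem inconsistency_graph_structure
    {F : Type} [Field F] [Fintype F] [DecidableEq F] {n k d mm : ℕ}
    (C : Submodule F (Fin n → F))
    (hk : Module.finrank F C = k)
    (hd : minDist (C : Set (Fin n → F)) = d)
    (r : (Fin (mm + 3) → Fin n) → F) (τ : ℝ) (h0τ : 0 ≤ τ) (hτ1 : τ ≤ 1)
    (c : ∀ (_ : Fin (mm + 3)) (_ : Fin n), (Fin (mm + 2) → Fin n) → F)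
    (hcmem : ∀ b i, c b i ∈ tensorPow (C : Set (Fin n → F)) (mm + 2))
    (hclosest : ∀ b i, relHammingDist (sliceAt r b i) (c b i) =
      distToCode (tensorPow (C : Set (Fin n → F)) (mm + 2)) (sliceAt r b i)) :
    let Adj := InconsAdj (C : Set (Fin n → F)) r τ c
    let deg : (Fin (mm + 3) × Fin n) → ℕ := fun v =>
      (Finset.univ.filter (fun w => w ≠ v ∧ Adj v w)).card
    (∀ v w, v ≠ w → Adj v w →
      ((mm + 1) * d : ℝ) / 2 ≤ deg v ∨ ((mm + 1) * d : ℝ) / 2 ≤ deg w) ∧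
    (∀ v w, v ≠ w → (deg v : ℝ) < ((mm + 1) * d : ℝ) / 2 →
      (deg w : ℝ) < ((mm + 1) * d : ℝ) / 2 → ¬ Adj v w) := by
  classical
  intro Adj deg
  -- basic numeric facts
  have hdn : d ≤ n := by
    have := minDist_le_card (C : Set (Fin n → F))
    rw [hd, Fintype.card_fin] at this
    exact this
  -- a vertex adjacent to everything has huge degree
  have hfull : ∀ u : Fin (mm + 3) × Fin n, (∀ u', u' ≠ u → Adj u u') →
      ((mm + 1) * d : ℝ) / 2 ≤ deg u := by
    intro u hu
    have hset : (Finset.univ.filter (fun w' => w' ≠ u ∧ Adj u w')) = Finset.univ.erase u := by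
      rw [← Finset.filter_ne']
      ext w'
      simp only [Finset.mem_filter, and_congr_right_iff]
      exact fun _ => ⟨fun h => h.1, fun h => ⟨h, hu w' h⟩⟩
    have hcard : deg u = (mm + 3) * n - 1 := by
      show (Finset.univ.filter (fun w' => w' ≠ u ∧ Adj u w')).card = _
      rw [hset, Finset.card_erase_of_mem (Finset.mem_univ u), Finset.card_univ]
      simp [Fintype.card_prod]
    have hn : 1 ≤ n := u.2.pos
    have h1 : 1 ≤ (mm + 3) * n := Nat.one_le_iff_ne_zero.mpr (by positivity)
    rw [hcard]
    rw [Nat.cast_sub h1]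
    push_cast
    have hM : (0:ℝ) ≤ (mm : ℝ) := Nat.cast_nonneg _
    have hdn' : (d:ℝ) ≤ n := Nat.cast_le.mpr hdn
    have hn' : (1:ℝ) ≤ n := by exact_mod_cast hn
    nlinarith [mul_le_mul_of_nonneg_left hdn' (by linarith : (0:ℝ) ≤ (mm:ℝ) + 1),
      mul_le_mul_of_nonneg_left hn' (by linarith : (0:ℝ) ≤ (mm:ℝ) + 5)]
  have key : ∀ v w, v ≠ w → Adj v w →
      ((mm + 1) * d : ℝ) / 2 ≤ deg v ∨ ((mm + 1) * d : ℝ) / 2 ≤ deg w := by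
    intro v w hvw hadj
    have hadj' : InconsAdj (C : Set (Fin n → F)) r τ c v w := hadj
    rcases hadj' with h | h | ⟨hne, j, hj1, hj2, hcj⟩
    · exact Or.inl (hfull v (fun u' _ => Or.inl h))
    · exact Or.inr (hfull w (fun u' _ => Or.inl h))
    -- main combinatorial case
    · set S : Fin (mm + 3) → Finset (Fin n) := fun b =>
        Finset.univ.filter (fun i => ∃ j' : Fin (mm + 3) → Fin n,
          j' v.1 = v.2 ∧ j' w.1 = w.2 ∧ j' b = i ∧
          c v.1 v.2 (fun t => j' (v.1.succAbove t)) ≠ c w.1 w.2 (fun t => j' (w.1.succAbove t)))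
        with hS_def
      have hS : ∀ b, b ≠ v.1 → b ≠ w.1 → d ≤ (S b).card := by
        intro b hb1 hb2
        obtain ⟨t₁, ht₁⟩ := Fin.exists_succAbove_eq hb1
        obtain ⟨t₂, ht₂⟩ := Fin.exists_succAbove_eq hb2
        set line : Fin n → F := fun i =>
          c v.1 v.2 (fun t => Function.update j b i (v.1.succAbove t)) -
          c w.1 w.2 (fun t => Function.update j b i (w.1.succAbove t)) with hline
        have hl1 : ∀ i, (fun t => Function.update j b i (v.1.succAbove t)) =
            Function.update (fun t => j (v.1.succAbove t)) t₁ i := by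
          intro i
          have := Function.update_comp_eq_of_injective j
            (Fin.succAbove_right_injective (p := v.1)) t₁ i
          rw [ht₁] at this
          exact this
        have hl2 : ∀ i, (fun t => Function.update j b i (w.1.succAbove t)) =
            Function.update (fun t => j (w.1.succAbove t)) t₂ i := by
          intro i
          have := Function.update_comp_eq_of_injective j
            (Fin.succAbove_right_injective (p := w.1)) t₂ i
          rw [ht₂] at this
          exact this
        have hmem : line ∈ C := by
          have heq : line = (fun i => c v.1 v.2 (Function.update (fun t => j (v.1.succAbove t)) t₁ i)) -
              (fun i => c w.1 w.2 (Function.update (fun t => j (w.1.succAbove t)) t₂ i)) := by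
            funext i
            show c v.1 v.2 _ - c w.1 w.2 _ = _
            rw [hl1 i, hl2 i]
            rfl
          rw [heq]
          exact sub_mem (hcmem v.1 v.2 t₁ _) (hcmem w.1 w.2 t₂ _)
        have hlnz : line (j b) ≠ 0 := by
          have hupd : Function.update j b (j b) = j := Function.update_eq_self b j
          simp only [hline, hupd]
          exact sub_ne_zero.mpr hcj
        have hsupp : Finset.univ.filter (fun i => line i ≠ 0) ⊆ S b := by
          intro i hi
          have hi' : line i ≠ 0 := (Finset.mem_filter.mp hi).2
          refine Finset.mem_filter.mpr ⟨Finset.mem_univ _, ?_⟩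
          refine ⟨Function.update j b i, ?_, ?_, Function.update_self b i j, ?_⟩
          · rw [Function.update_of_ne hb1.symm]; exact hj1
          · rw [Function.update_of_ne hb2.symm]; exact hj2
          · exact sub_ne_zero.mp hi'
        calc d ≤ (Finset.univ.filter (fun i => line i ≠ 0)).card := by
              rw [← hd]
              exact minDist_le_weight C hmem (fun h0 => hlnz (by rw [h0]; rfl))
          _ ≤ (S b).card := Finset.card_le_card hsupp
      have hSadj : ∀ b, b ≠ v.1 → b ≠ w.1 → ∀ i ∈ S b,
          ((b, i) ≠ v ∧ Adj v (b, i)) ∨ ((b, i) ≠ w ∧ Adj w (b, i)) := by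
        intro b hb1 hb2 i hi
        obtain ⟨j', h1, h2, h3, h4⟩ := (Finset.mem_filter.mp hi).2
        by_cases hc : c v.1 v.2 (fun t => j' (v.1.succAbove t)) = c b i (fun t => j' (b.succAbove t))
        · refine Or.inr ⟨fun he => hb2 (congrArg Prod.fst he), ?_⟩
          exact Or.inr (Or.inr ⟨hb2.symm, j', h2, h3, fun he => h4 (hc.trans he.symm)⟩)
        · refine Or.inl ⟨fun he => hb1 (congrArg Prod.fst he), ?_⟩
          exact Or.inr (Or.inr ⟨hb1.symm, j', h1, h3, hc⟩)
      -- assemble the counting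
      set B : Finset (Fin (mm + 3)) := Finset.univ.filter (fun b => b ≠ v.1 ∧ b ≠ w.1) with hB_def
      have hB : B.card = mm + 1 := by
        have hBeq : B = Finset.univ \ {v.1, w.1} := by
          ext b
          simp [hB_def, not_or]
        rw [hBeq, Finset.card_sdiff_of_subset (Finset.subset_univ _), Finset.card_univ,
          Fintype.card_fin, Finset.card_pair hne]
        omega
      set P : Finset (Fin (mm + 3) × Fin n) :=
        B.biUnion (fun b => (S b).image (fun i => (b, i))) with hP_def
      have hPcard : (mm + 1) * d ≤ P.card := by
        rw [hP_def, Finset.card_biUnion]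
        · calc (mm + 1) * d = ∑ _b ∈ B, d := by rw [Finset.sum_const, hB, smul_eq_mul]
            _ ≤ ∑ b ∈ B, ((S b).image (fun i => (b, i))).card := by
              refine Finset.sum_le_sum ?_
              intro b hb
              obtain ⟨hb1, hb2⟩ := (Finset.mem_filter.mp hb).2
              rw [Finset.card_image_of_injective _ (fun a a' ha => by
                simpa using congrArg Prod.snd ha)]
              exact hS b hb1 hb2
        · intro x _ y _ hxy
          rw [Function.onFun, Finset.disjoint_left]
          intro p hp hp'
          obtain ⟨_, _, rfl⟩ := Finset.mem_image.mp hp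
          obtain ⟨_, _, hpe⟩ := Finset.mem_image.mp hp'
          exact hxy (congrArg Prod.fst hpe).symm
      have hPsub : P ⊆ (Finset.univ.filter (fun w' => w' ≠ v ∧ Adj v w')) ∪
          (Finset.univ.filter (fun w' => w' ≠ w ∧ Adj w w')) := by
        intro p hp
        obtain ⟨b, hb, hpmem⟩ := Finset.mem_biUnion.mp hp
        obtain ⟨i, hi, rfl⟩ := Finset.mem_image.mp hpmem
        obtain ⟨hb1, hb2⟩ := (Finset.mem_filter.mp hb).2
        rcases hSadj b hb1 hb2 i hi with ⟨hne', hadj'⟩ | ⟨hne', hadj'⟩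
        · exact Finset.mem_union_left _ (Finset.mem_filter.mpr ⟨Finset.mem_univ _, hne', hadj'⟩)
        · exact Finset.mem_union_right _ (Finset.mem_filter.mpr ⟨Finset.mem_univ _, hne', hadj'⟩)
      have hsum : (mm + 1) * d ≤ deg v + deg w := by
        calc (mm + 1) * d ≤ P.card := hPcard
          _ ≤ ((Finset.univ.filter (fun w' => w' ≠ v ∧ Adj v w')) ∪
              (Finset.univ.filter (fun w' => w' ≠ w ∧ Adj w w'))).card := Finset.card_le_card hPsub
          _ ≤ deg v + deg w := Finset.card_union_le _ _
      by_contra hcon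
      push_neg at hcon
      obtain ⟨h1, h2⟩ := hcon
      have hsum' : ((mm : ℝ) + 1) * d ≤ (deg v : ℝ) + (deg w : ℝ) := by exact_mod_cast hsum
      linarith
  refine ⟨key, ?_⟩
  intro v w hvw h1 h2 hadj
  rcases key v w hvw hadj with h | h <;> linarith
end
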